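/- Let A be a monotone graph property and p = p(n), M = M(n) with M = o(√(p·(n choose 2))). Then |μ(p) − μ⁺(p, M)| = o(1), where μ(p) = P[G(n,p) ∈ A] and μ⁺(p,M) is the probability that the graph obtained by adding M uniformly random edges (pairs of vertices) to G(n,p) lies in A. -/

import Mathlib

open MeasureTheory ENNReal

/-- The Erdős–Rényi random graph `G(n,p)`, encoded as the product of independent
Bernoulli(`p`) indicators, one for each unordered pair of vertices. -/
noncomputable def erMeasure (n : ℕ) (p : ℝ≥0∞) : Measure (Sym2 (Fin n) → Bool) :=
  Measure.pi fun _ => (PMF.bernoulli (min p 1).toNNReal (by rw [← ENNReal.coe_le_one_iff, ENNReal.coe_toNNReal (ne_top_of_le_ne_top one_ne_top (min_le_right _ _))]; exact min_le_right _ _)).toMeasure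

/-- The simple graph on `{1,…,n}` determined by an edge-indicator function. -/
def graphOf {n : ℕ} (ω : Sym2 (Fin n) → Bool) : SimpleGraph (Fin n) where
  Adj u v := u ≠ v ∧ ω s(u, v) = true
  symm := ⟨by
    intro u v ⟨h, h'⟩
    exact ⟨h.symm, by rwa [Sym2.eq_swap]⟩⟩
  loopless := ⟨fun v ⟨h, _⟩ => h rfl⟩

/-- The result of adding the set `s` of edges to the edge-indicator `ω`. -/
def addEdges {n : ℕ} (s : Finset (Sym2 (Fin n))) (ω : Sym2 (Fin n) → Bool) :
    Sym2 (Fin n) → Bool :=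
  fun e => ω e || decide (e ∈ s)

/-- `G(n,p,+M)`: sample `G(n,p)`, then add a uniformly random set of `M` of the
`(n choose 2)` pairs of vertices as edges. -/
noncomputable def erPlus (n : ℕ) (p : ℝ≥0∞) (M : ℕ) : Measure (Sym2 (Fin n) → Bool) :=
  ((((Finset.univ.filter fun e : Sym2 (Fin n) => ¬ e.IsDiag).powersetCard M).card : ℝ≥0∞))⁻¹ •
    ∑ s ∈ (Finset.univ.filter fun e : Sym2 (Fin n) => ¬ e.IsDiag).powersetCard M,
      Measure.map (addEdges s) (erMeasure n p)


set_option linter.unusedSectionVars false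
set_option linter.unusedVariables false
set_option maxHeartbeats 2000000

namespace Stmt13
open Finset
variable {ι : Type*} [Fintype ι] [DecidableEq ι]

variable {ι : Type*} [Fintype ι] [DecidableEq ι]



/-- weight of one Bernoulli coordinate -/
def wgt (r : ℝ) (b : Bool) : ℝ := if b then r else 1 - r

/-- weight of a configuration -/
def W (ρ : ι → ℝ) (ω : ι → Bool) : ℝ := ∏ e, wgt (ρ e) (ω e)

/-- probability of a set of configurations -/
noncomputable def mS (ρ : ι → ℝ) (A : Set (ι → Bool)) : ℝ :=
  ∑ ω : ι → Bool, A.indicator (W ρ) ω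

lemma wgt_nonneg {r : ℝ} (h0 : 0 ≤ r) (h1 : r ≤ 1) (b : Bool) : 0 ≤ wgt r b := by
  cases b <;> simp [wgt] <;> linarith

lemma W_nonneg {ρ : ι → ℝ} (h : ∀ e, 0 ≤ ρ e ∧ ρ e ≤ 1) (ω : ι → Bool) : 0 ≤ W ρ ω :=
  Finset.prod_nonneg fun e _ => wgt_nonneg (h e).1 (h e).2 _

lemma sum_prod_eq (g : ι → Bool → ℝ) :
    ∑ ω : ι → Bool, ∏ e, g e (ω e) = ∏ e, (g e false + g e true) := by
  rw [← Fintype.prod_sum]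
  exact Finset.prod_congr rfl fun e _ => by rw [Fintype.sum_bool]; ring

lemma sum_W (ρ : ι → ℝ) : ∑ ω : ι → Bool, W ρ ω = 1 := by
  rw [show (fun ω : ι → Bool => W ρ ω) = fun ω => ∏ e, wgt (ρ e) (ω e) from rfl, sum_prod_eq]
  simp [wgt]

lemma mS_nonneg {ρ : ι → ℝ} (h : ∀ e, 0 ≤ ρ e ∧ ρ e ≤ 1) (A : Set (ι → Bool)) :
    0 ≤ mS ρ A :=
  Finset.sum_nonneg fun ω _ => Set.indicator_nonneg (fun x _ => W_nonneg h x) ω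

lemma mS_le_one {ρ : ι → ℝ} (h : ∀ e, 0 ≤ ρ e ∧ ρ e ≤ 1) (A : Set (ι → Bool)) :
    mS ρ A ≤ 1 := by
  rw [← sum_W ρ]
  exact Finset.sum_le_sum fun ω _ => Set.indicator_le_self' (fun x _ => W_nonneg h x) ω

lemma mS_mono {ρ : ι → ℝ} (h : ∀ e, 0 ≤ ρ e ∧ ρ e ≤ 1) {A B : Set (ι → Bool)}
    (hAB : A ⊆ B) : mS ρ A ≤ mS ρ B :=
  Finset.sum_le_sum fun ω _ =>
    Set.indicator_le_indicator_of_subset hAB (fun x => W_nonneg h x) ω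



/-- product-Bernoulli(ε) weight of a subset K of D -/
def WKp (ε : ℝ) (D K : Finset ι) : ℝ := (∏ _e ∈ K, ε) * ∏ _e ∈ D \ K, (1 - ε)

lemma WKp_nonneg {ε : ℝ} (h0 : 0 ≤ ε) (h1 : ε ≤ 1) (D K : Finset ι) : 0 ≤ WKp ε D K :=
  mul_nonneg (prod_nonneg fun _ _ => h0) (prod_nonneg fun _ _ => by linarith)

lemma WKp_eq_pow {ε : ℝ} {D K : Finset ι} (h : K ⊆ D) :
    WKp ε D K = ε ^ K.card * (1 - ε) ^ (D.card - K.card) := by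
  rw [WKp, prod_const, prod_const, card_sdiff_of_subset h]

lemma sum_WKp (ε : ℝ) (D : Finset ι) : ∑ K ∈ D.powerset, WKp ε D K = 1 := by
  rw [show ∑ K ∈ D.powerset, WKp ε D K
      = ∑ K ∈ D.powerset, (∏ _e ∈ K, ε) * ∏ _e ∈ D \ K, (1 - ε) from rfl,
    ← Finset.prod_add]
  simp

lemma marg_one {ε : ℝ} {D : Finset ι} {a : ι} (ha : a ∈ D) :
    ∑ K ∈ D.powerset, (if a ∈ K then (1:ℝ) else 0) * WKp ε D K = ε := by
  have h : ∀ K ∈ D.powerset, (if a ∈ K then (1:ℝ) else 0) * WKp ε D K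
      = (∏ e ∈ K, ε) * ∏ e ∈ D \ K, (if e = a then 0 else 1 - ε) := by
    intro K hK
    rw [mem_powerset] at hK
    by_cases haK : a ∈ K
    · have : ∀ e ∈ D \ K, (if e = a then (0:ℝ) else 1 - ε) = 1 - ε := by
        intro e he; rw [mem_sdiff] at he
        have : e ≠ a := fun h => he.2 (h ▸ haK)
        simp [this]
      rw [Finset.prod_congr rfl this, if_pos haK, one_mul, WKp]
    · rw [if_neg haK, zero_mul]
      have haDK : a ∈ D \ K := mem_sdiff.2 ⟨ha, haK⟩
      rw [Finset.prod_eq_zero haDK (by simp), mul_zero]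
  rw [Finset.sum_congr rfl h, ← Finset.prod_add]
  rw [Finset.prod_eq_single a (fun b _ hb => by simp [hb]) (fun h => absurd ha h)]
  simp

lemma marg_two {ε : ℝ} {D : Finset ι} {a b : ι} (ha : a ∈ D) (hb : b ∈ D) (hab : a ≠ b) :
    ∑ K ∈ D.powerset, (if a ∈ K then (1:ℝ) else 0) * ((if b ∈ K then (1:ℝ) else 0) * WKp ε D K)
      = ε ^ 2 := by
  have h : ∀ K ∈ D.powerset, (if a ∈ K then (1:ℝ) else 0) * ((if b ∈ K then (1:ℝ) else 0) * WKp ε D K)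
      = (∏ e ∈ K, ε) * ∏ e ∈ D \ K, (if e = a ∨ e = b then 0 else 1 - ε) := by
    intro K hK
    by_cases haK : a ∈ K
    · by_cases hbK : b ∈ K
      · have : ∀ e ∈ D \ K, (if e = a ∨ e = b then (0:ℝ) else 1 - ε) = 1 - ε := by
          intro e he; rw [mem_sdiff] at he
          have h1 : ¬(e = a ∨ e = b) := by
            rintro (rfl | rfl); exacts [he.2 haK, he.2 hbK]
          simp [h1]
        rw [Finset.prod_congr rfl this, if_pos haK, if_pos hbK, one_mul, one_mul, WKp]
      · rw [if_neg hbK, zero_mul, mul_zero,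
          Finset.prod_eq_zero (mem_sdiff.2 ⟨hb, hbK⟩) (by simp), mul_zero]
    · rw [if_neg haK, zero_mul,
        Finset.prod_eq_zero (mem_sdiff.2 ⟨ha, haK⟩) (by simp), mul_zero]
  rw [Finset.sum_congr rfl h, ← Finset.prod_add]
  have key : ∀ e ∈ D, (ε + if e = a ∨ e = b then 0 else 1 - ε)
      = if e = a ∨ e = b then ε else 1 := by
    intro e _; by_cases h : e = a ∨ e = b <;> simp [h]
  rw [Finset.prod_congr rfl key]
  rw [← Finset.prod_filter_mul_prod_filter_not D (fun e => e = a ∨ e = b)]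
  have h1 : D.filter (fun e => e = a ∨ e = b) = {a, b} := by
    ext e
    simp only [mem_filter, mem_insert, mem_singleton]
    constructor
    · rintro ⟨_, h⟩; exact h
    · rintro (rfl | rfl); exacts [⟨ha, Or.inl rfl⟩, ⟨hb, Or.inr rfl⟩]
  rw [h1]
  have h2 : ∀ e ∈ D.filter (fun e => ¬(e = a ∨ e = b)), (if e = a ∨ e = b then ε else (1:ℝ)) = 1 := by
    intro e he; rw [mem_filter] at he; simp [he.2]
  rw [Finset.prod_congr rfl h2, prod_const_one, mul_one,
    Finset.prod_insert (by simp [hab]), Finset.prod_singleton]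
  simp [hab]
  ring




lemma card_eq_sum_ind {D K : Finset ι} (h : K ⊆ D) :
    (K.card : ℝ) = ∑ a ∈ D, (if a ∈ K then (1:ℝ) else 0) := by
  rw [Finset.sum_ite_mem, Finset.inter_eq_right.2 h]
  simp

lemma moment_one (ε : ℝ) (D : Finset ι) :
    ∑ K ∈ D.powerset, WKp ε D K * K.card = D.card * ε := by
  have h : ∀ K ∈ D.powerset, WKp ε D K * K.card
      = ∑ a ∈ D, (if a ∈ K then (1:ℝ) else 0) * WKp ε D K := by
    intro K hK
    rw [mem_powerset] at hK
    rw [← Finset.sum_mul, ← card_eq_sum_ind hK, mul_comm]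
  rw [Finset.sum_congr rfl h, Finset.sum_comm]
  rw [Finset.sum_congr rfl (fun a ha => marg_one (ε := ε) ha), sum_const, nsmul_eq_mul]

lemma moment_two (ε : ℝ) (D : Finset ι) :
    ∑ K ∈ D.powerset, WKp ε D K * (K.card : ℝ)^2
      = D.card * ε + ((D.card : ℝ)^2 - D.card) * ε^2 := by
  have h : ∀ K ∈ D.powerset, WKp ε D K * (K.card : ℝ)^2
      = ∑ a ∈ D, ∑ b ∈ D, (if a ∈ K then (1:ℝ) else 0) * ((if b ∈ K then (1:ℝ) else 0) * WKp ε D K) := by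
    intro K hK
    rw [mem_powerset] at hK
    rw [sq, card_eq_sum_ind hK, Finset.sum_mul_sum, mul_comm, Finset.sum_mul]
    exact Finset.sum_congr rfl fun a _ => by rw [Finset.sum_mul]; exact Finset.sum_congr rfl fun b _ => by ring
  rw [Finset.sum_congr rfl h, Finset.sum_comm]
  have h2 : ∀ a ∈ D, ∑ K ∈ D.powerset, ∑ b ∈ D,
      (if a ∈ K then (1:ℝ) else 0) * ((if b ∈ K then (1:ℝ) else 0) * WKp ε D K)
      = ε + ((D.card : ℝ) - 1) * ε^2 := by
    intro a ha
    rw [Finset.sum_comm]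
    have h3 : ∀ b ∈ D, ∑ K ∈ D.powerset,
        (if a ∈ K then (1:ℝ) else 0) * ((if b ∈ K then (1:ℝ) else 0) * WKp ε D K)
        = if b = a then ε else ε^2 := by
      intro b hb
      by_cases hba : b = a
      · subst hba
        rw [if_pos rfl]
        have : ∀ K ∈ D.powerset, (if b ∈ K then (1:ℝ) else 0) * ((if b ∈ K then (1:ℝ) else 0) * WKp ε D K)
            = (if b ∈ K then (1:ℝ) else 0) * WKp ε D K := by
          intro K _; by_cases h : b ∈ K <;> simp [h]
        rw [Finset.sum_congr rfl this, marg_one hb]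
      · rw [if_neg hba, marg_two ha hb (fun h => hba h.symm)]
    rw [Finset.sum_congr rfl h3]
    have : ∀ b ∈ D, (if b = a then ε else ε^2) = ε^2 + (if b = a then ε - ε^2 else 0) := by
      intro b _; by_cases h : b = a <;> simp [h]
    rw [Finset.sum_congr rfl this, Finset.sum_add_distrib, Finset.sum_ite_eq' D a (fun _ => ε - ε^2),
      if_pos ha, sum_const, nsmul_eq_mul]
    ring
  rw [Finset.sum_congr rfl h2, sum_const, nsmul_eq_mul]
  ring

lemma tail_bound {ε : ℝ} (h0 : 0 ≤ ε) (h1 : ε ≤ 1) (D : Finset ι) (M : ℕ)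
    (hlt : (M : ℝ) < D.card * ε) :
    ∑ K ∈ D.powerset.filter (fun K => K.card < M), WKp ε D K
      ≤ D.card * ε * (D.card * ε - M)⁻¹ ^ 2 := by
  set N := D.card
  have key : ∀ K ∈ D.powerset.filter (fun K => K.card < M),
      WKp ε D K * (N * ε - M)^2 ≤ WKp ε D K * ((K.card : ℝ) - N * ε)^2 := by
    intro K hK
    rw [mem_filter] at hK
    apply mul_le_mul_of_nonneg_left _ (WKp_nonneg h0 h1 D K)
    have hc : (K.card : ℝ) ≤ M := by exact_mod_cast hK.2.le
    have h2 : (0:ℝ) ≤ N * ε - M := by linarith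
    calc (N * ε - M)^2 ≤ (N * ε - K.card)^2 := by
          apply pow_le_pow_left₀ h2; linarith
      _ = ((K.card : ℝ) - N * ε)^2 := by ring
  have var : ∑ K ∈ D.powerset, WKp ε D K * ((K.card : ℝ) - N * ε)^2 = N * ε * (1 - ε) := by
    have expand : ∀ K ∈ D.powerset, WKp ε D K * ((K.card : ℝ) - N * ε)^2
        = WKp ε D K * (K.card : ℝ)^2 - (2 * (N * ε)) * (WKp ε D K * K.card)
          + (N*ε)^2 * WKp ε D K := by
      intro K _; ring
    rw [Finset.sum_congr rfl expand, Finset.sum_add_distrib, Finset.sum_sub_distrib,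
      ← Finset.mul_sum, ← Finset.mul_sum, moment_one, moment_two, sum_WKp]
    ring
  have step : (∑ K ∈ D.powerset.filter (fun K => K.card < M), WKp ε D K) * (N * ε - M)^2
      ≤ N * ε * (1 - ε) := by
    rw [Finset.sum_mul]
    calc ∑ K ∈ D.powerset.filter (fun K => K.card < M), WKp ε D K * (N * ε - M)^2
        ≤ ∑ K ∈ D.powerset.filter (fun K => K.card < M), WKp ε D K * ((K.card : ℝ) - N * ε)^2 :=
          Finset.sum_le_sum key
      _ ≤ ∑ K ∈ D.powerset, WKp ε D K * ((K.card : ℝ) - N * ε)^2 := by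
          apply Finset.sum_le_sum_of_subset_of_nonneg (Finset.filter_subset _ _)
          intro K hK _
          exact mul_nonneg (WKp_nonneg h0 h1 D K) (sq_nonneg _)
      _ = N * ε * (1 - ε) := var
  have hpos : (0:ℝ) < (N * ε - M)^2 := pow_pos (by linarith) 2
  · rw [← le_div_iff₀ hpos] at step
    calc ∑ K ∈ D.powerset.filter (fun K => K.card < M), WKp ε D K
        ≤ N * ε * (1 - ε) / (N * ε - M)^2 := step
      _ ≤ N * ε * (N * ε - M)⁻¹^2 := by
          rw [div_eq_mul_inv, ← inv_pow]
          apply mul_le_mul_of_nonneg_right _ (by positivity)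
          have hN : (0:ℝ) ≤ N * ε := by positivity
          nlinarith


def addE (s : Finset ι) (ω : ι → Bool) : ι → Bool := fun e => ω e || decide (e ∈ s)
def gJ (ε p : ℝ) (D : Finset ι) (e : ι) (c : Bool × Bool) : ℝ :=
  (if e ∈ D then (if c.1 then ε else 1 - ε) else (if c.1 then 0 else 1)) * wgt p c.2
def combω (ξ : ι → Bool × Bool) : ι → Bool := fun e => (ξ e).2 || (ξ e).1

lemma percoord (ε p : ℝ) (D : Finset ι) (e : ι) (b : Bool) :
    ∑ c ∈ Finset.univ.filter (fun c : Bool × Bool => (c.2 || c.1) = b), gJ ε p D e c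
      = wgt (if e ∈ D then p + ε * (1 - p) else p) b := by
  rw [Finset.sum_filter, Fintype.sum_prod_type]
  by_cases hD : e ∈ D <;> cases b <;>
    simp [gJ, wgt, hD] <;> ring

lemma identityI (p ε : ℝ) (D : Finset ι) (A : Set (ι → Bool)) :
    mS (fun e => if e ∈ D then p + ε * (1 - p) else p) A
      = ∑ K ∈ D.powerset, WKp ε D K * mS (fun _ => p) (addE K ⁻¹' A) := by
  classical
  have claim1 : ∑ ξ : ι → Bool × Bool,
        A.indicator (fun _ => ∏ e, gJ ε p D e (ξ e)) (combω ξ)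
      = mS (fun e => if e ∈ D then p + ε * (1 - p) else p) A := by
    rw [← Finset.sum_fiberwise_of_maps_to (g := combω) (t := Finset.univ)
      (fun ξ _ => Finset.mem_univ _)
      (fun ξ => A.indicator (fun _ => ∏ e, gJ ε p D e (ξ e)) (combω ξ))]
    unfold mS
    apply Finset.sum_congr rfl
    intro ω' _
    have hfib : Finset.univ.filter (fun ξ : ι → Bool × Bool => combω ξ = ω')
        = Fintype.piFinset (fun e => Finset.univ.filter (fun c : Bool × Bool => (c.2 || c.1) = ω' e)) := by
      ext ξ
      simp only [Finset.mem_filter, Finset.mem_univ, true_and, Fintype.mem_piFinset, combω,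
        funext_iff]
    by_cases hω' : ω' ∈ A
    · have h1 : ∀ ξ ∈ Finset.univ.filter (fun ξ : ι → Bool × Bool => combω ξ = ω'),
          A.indicator (fun _ : ι → Bool => ∏ e, gJ ε p D e (ξ e)) (combω ξ)
            = ∏ e, gJ ε p D e (ξ e) := by
        intro ξ hξ
        rw [(Finset.mem_filter.1 hξ).2, Set.indicator_of_mem hω']
      rw [Finset.sum_congr rfl h1, Set.indicator_of_mem hω', hfib, ← Finset.prod_univ_sum]
      unfold W
      exact Finset.prod_congr rfl fun e _ => percoord ε p D e (ω' e)
    · have h1 : ∀ ξ ∈ Finset.univ.filter (fun ξ : ι → Bool × Bool => combω ξ = ω'),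
          A.indicator (fun _ : ι → Bool => ∏ e, gJ ε p D e (ξ e)) (combω ξ) = 0 := by
        intro ξ hξ
        rw [(Finset.mem_filter.1 hξ).2, Set.indicator_of_notMem hω']
      rw [Finset.sum_congr rfl h1, Set.indicator_of_notMem hω', Finset.sum_const_zero]
  have claim2 : ∑ ξ : ι → Bool × Bool,
        A.indicator (fun _ => ∏ e, gJ ε p D e (ξ e)) (combω ξ)
      = ∑ K ∈ D.powerset, WKp ε D K * mS (fun _ => p) (addE K ⁻¹' A) := by
    have hmS : ∀ K : Finset ι, mS (fun _ => p) (addE K ⁻¹' A)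
        = ∑ ω : ι → Bool, if addE K ω ∈ A then W (fun _ => p) ω else 0 := by
      intro K
      unfold mS
      exact Finset.sum_congr rfl fun ω _ => by
        rw [Set.indicator_apply]; simp [Set.mem_preimage]
    have hRHS : ∑ K ∈ D.powerset, WKp ε D K * mS (fun _ => p) (addE K ⁻¹' A)
        = ∑ z ∈ D.powerset ×ˢ (Finset.univ : Finset (ι → Bool)),
            (if addE z.1 z.2 ∈ A then WKp ε D z.1 * W (fun _ => p) z.2 else 0) := by
      rw [Finset.sum_product]
      apply Finset.sum_congr rfl
      intro K _
      rw [hmS, Finset.mul_sum]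
      exact Finset.sum_congr rfl fun ω _ => by
        by_cases h : addE K ω ∈ A <;> simp [h]
    rw [hRHS]
    have hzero : ∀ ξ ∈ (Finset.univ : Finset (ι → Bool × Bool)),
        A.indicator (fun _ : ι → Bool => ∏ e, gJ ε p D e (ξ e)) (combω ξ) ≠ 0 →
          (∀ e, (ξ e).1 = true → e ∈ D) := by
      intro ξ _ hΦne
      by_contra hc
      push_neg at hc
      obtain ⟨e, he1, he2⟩ := hc
      apply hΦne
      have hz : ∏ e, gJ ε p D e (ξ e) = 0 :=
        Finset.prod_eq_zero (Finset.mem_univ e) (by simp [gJ, he2, he1])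
      simp only [hz]
      exact Set.indicator_apply_eq_zero.2 fun _ => rfl
    rw [← Finset.sum_filter_of_ne hzero]
    apply Finset.sum_nbij'
      (i := fun ξ => ((Finset.univ.filter fun e => (ξ e).1 = true : Finset ι),
        fun e => (ξ e).2))
      (j := fun z => fun e => (decide (e ∈ z.1), z.2 e))
    · intro ξ hξ
      rw [Finset.mem_filter] at hξ
      rw [Finset.mem_product]
      refine ⟨Finset.mem_powerset.2 fun e he => ?_, Finset.mem_univ _⟩
      exact hξ.2 e (Finset.mem_filter.1 he).2
    · intro z hz
      rw [Finset.mem_product, Finset.mem_powerset] at hz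
      rw [Finset.mem_filter]
      refine ⟨Finset.mem_univ _, fun e he => ?_⟩
      simp only [decide_eq_true_eq] at he
      exact hz.1 he
    · intro ξ _
      funext e
      rw [Prod.ext_iff]
      constructor
      · simp only [Finset.mem_filter, Finset.mem_univ, true_and]
        cases h : (ξ e).1 <;> simp [h]
      · rfl
    · intro z hz
      rw [Prod.ext_iff]
      constructor
      · ext e
        simp
      · rfl
    · intro ξ hξ
      have hPξ : ∀ e, (ξ e).1 = true → e ∈ D := (Finset.mem_filter.1 hξ).2
      set K := Finset.univ.filter fun e : ι => (ξ e).1 = true with hK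
      have hcomb : combω ξ = addE K (fun e => (ξ e).2) := by
        funext e
        simp only [combω, addE, hK, Finset.mem_filter, Finset.mem_univ, true_and]
        cases h : (ξ e).1 <;> simp [h]
      have hprod : ∏ e, gJ ε p D e (ξ e) = WKp ε D K * W (fun _ => p) (fun e => (ξ e).2) := by
        unfold gJ
        rw [Finset.prod_mul_distrib]
        congr 1
        have hKD : K ⊆ D := fun e he => hPξ e (Finset.mem_filter.1 he).2
        rw [← Finset.prod_mul_prod_compl D, ← Finset.prod_sdiff hKD]
        have h1 : ∀ e ∈ D \ K, (if e ∈ D then (if (ξ e).1 then ε else 1 - ε)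
            else (if (ξ e).1 then (0:ℝ) else 1)) = 1 - ε := by
          intro e he
          have heD := (Finset.mem_sdiff.1 he).1
          have heK : (ξ e).1 = false := by
            have h2 := (Finset.mem_sdiff.1 he).2
            rw [hK, Finset.mem_filter] at h2
            simpa using h2
          simp [heD, heK]
        have h2 : ∀ e ∈ K, (if e ∈ D then (if (ξ e).1 then ε else 1 - ε)
            else (if (ξ e).1 then (0:ℝ) else 1)) = ε := by
          intro e he
          have h3 : (ξ e).1 = true := (Finset.mem_filter.1 he).2
          simp [hKD he, h3]
        have h3 : ∀ e ∈ Dᶜ, (if e ∈ D then (if (ξ e).1 then ε else 1 - ε)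
            else (if (ξ e).1 then (0:ℝ) else 1)) = 1 := by
          intro e he
          rw [Finset.mem_compl] at he
          have h4 : (ξ e).1 = false := by
            cases h : (ξ e).1
            · rfl
            · exact absurd (hPξ e h) he
          simp [he, h4]
        rw [Finset.prod_congr rfl h1, Finset.prod_congr rfl h2, Finset.prod_congr rfl h3, WKp]
        simp [mul_comm]
      simp only [Set.indicator_apply, hcomb, hprod]
  rw [← claim1, claim2]

lemma sum_powerset_card_fun (u : Finset ι) (f : Finset ι → ℝ) (g : ℕ → ℝ)
    (hfg : ∀ J ∈ u.powerset, f J = g J.card) :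
    ∑ J ∈ u.powerset, f J = ∑ j ∈ Finset.range (u.card + 1), (u.card.choose j : ℝ) * g j := by
  rw [Finset.sum_congr rfl hfg, Finset.sum_powerset_apply_card]
  simp only [nsmul_eq_mul]

lemma coeff_lemma {ε : ℝ} {D s : Finset ι} {M : ℕ} (hs : s ∈ D.powersetCard M) :
    (D.card.choose M : ℝ) * ∑ K ∈ D.powerset.filter (fun K => s ⊆ K),
        ((K.card.choose M : ℝ))⁻¹ * WKp ε D K
      = ∑ K ∈ D.powerset.filter (fun K => M ≤ K.card), WKp ε D K := by
  obtain ⟨hsD, hscard⟩ := Finset.mem_powersetCard.1 hs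
  set N := D.card with hN
  have hMN : M ≤ N := hscard ▸ Finset.card_le_card hsD
  have lhs_eq : ∑ K ∈ D.powerset.filter (fun K => s ⊆ K),
      ((K.card.choose M : ℝ))⁻¹ * WKp ε D K
      = ∑ J ∈ (D \ s).powerset,
          ((((M + J.card).choose M : ℝ))⁻¹ * (ε ^ (M + J.card) * (1 - ε) ^ (N - (M + J.card)))) := by
    apply Finset.sum_nbij' (i := fun K => K \ s) (j := fun J => s ∪ J)
    · intro K hK
      rw [Finset.mem_filter, Finset.mem_powerset] at hK
      exact Finset.mem_powerset.2 (Finset.sdiff_subset_sdiff hK.1 (le_refl s))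
    · intro J hJ
      rw [Finset.mem_powerset] at hJ
      rw [Finset.mem_filter, Finset.mem_powerset]
      exact ⟨Finset.union_subset hsD (hJ.trans Finset.sdiff_subset), Finset.subset_union_left⟩
    · intro K hK
      rw [Finset.mem_filter] at hK
      exact Finset.union_sdiff_of_subset hK.2
    · intro J hJ
      rw [Finset.mem_powerset] at hJ
      exact Finset.union_sdiff_cancel_left
        (Finset.disjoint_of_subset_right hJ Finset.sdiff_disjoint.symm)
    · intro K hK
      rw [Finset.mem_filter, Finset.mem_powerset] at hK
      have hMK : M ≤ K.card := hscard ▸ Finset.card_le_card hK.2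
      have hcard : M + (K \ s).card = K.card := by
        rw [Finset.card_sdiff_of_subset hK.2, hscard]
        omega
      rw [hcard, WKp_eq_pow hK.1]
  rw [lhs_eq, sum_powerset_card_fun (D \ s) _
    (fun j => (((M + j).choose M : ℝ))⁻¹ * (ε ^ (M + j) * (1 - ε) ^ (N - (M + j))))
    (fun J _ => rfl)]
  have hcardDs : (D \ s).card = N - M := by rw [Finset.card_sdiff_of_subset hsD, hscard]
  have rhs_eq : ∑ K ∈ D.powerset.filter (fun K => M ≤ K.card), WKp ε D K
      = ∑ k ∈ Finset.range (N + 1), ((N.choose k : ℝ)) *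
          (if M ≤ k then ε ^ k * (1 - ε) ^ (N - k) else 0) := by
    rw [Finset.sum_filter]
    have : ∀ K ∈ D.powerset, (if M ≤ K.card then WKp ε D K else 0)
        = (fun c => if M ≤ c then ε ^ c * (1 - ε) ^ (N - c) else 0) K.card := by
      intro K hK
      by_cases h : M ≤ K.card
      · simp only [if_pos h]
        exact WKp_eq_pow (Finset.mem_powerset.1 hK)
      · simp [h]
    rw [Finset.sum_congr rfl this]
    exact sum_powerset_card_fun D _ (fun c => if M ≤ c then ε ^ c * (1 - ε) ^ (N - c) else 0)
      (fun J _ => rfl)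
  rw [rhs_eq]
  have collapse : ∑ k ∈ Finset.range (N + 1), ((N.choose k : ℝ)) *
      (if M ≤ k then ε ^ k * (1 - ε) ^ (N - k) else 0)
      = ∑ k ∈ Finset.Ico M (N + 1), ((N.choose k : ℝ)) * (ε ^ k * (1 - ε) ^ (N - k)) := by
    have h1 : ∀ k ∈ Finset.range (N + 1), ((N.choose k : ℝ)) *
        (if M ≤ k then ε ^ k * (1 - ε) ^ (N - k) else 0)
        = if M ≤ k then ((N.choose k : ℝ)) * (ε ^ k * (1 - ε) ^ (N - k)) else 0 := by
      intro k _
      split <;> simp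
    rw [Finset.sum_congr rfl h1, ← Finset.sum_filter]
    apply Finset.sum_congr
    · ext k
      simp only [Finset.mem_filter, Finset.mem_range, Finset.mem_Ico]
      omega
    · intro k _
      rfl
  rw [collapse, Finset.sum_Ico_eq_sum_range]
  have hrange : N + 1 - M = (N - M) + 1 := by omega
  rw [hrange, hcardDs, Finset.mul_sum]
  apply Finset.sum_congr rfl
  intro j hj
  rw [Finset.mem_range] at hj
  have hjNM : j ≤ N - M := by omega
  have hkn : M + j ≤ N := by omega
  have hid := Nat.choose_mul (n := N) (Nat.le_add_right M j)
  rw [show M + j - M = j from by omega] at hid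
  have hthis : (N.choose M : ℝ) * ((N - M).choose j : ℝ)
      = ((N.choose (M + j) : ℝ)) * (((M + j).choose M : ℝ)) := by
    exact_mod_cast hid.symm
  have hNe : (((M + j).choose M : ℝ)) ≠ 0 := by
    exact_mod_cast (Nat.choose_pos (Nat.le_add_right M j)).ne'
  rw [← mul_assoc, hthis, mul_assoc, ← mul_assoc (((M + j).choose M : ℝ)), mul_inv_cancel₀ hNe,
    one_mul]

lemma sqrt_prod {s : Finset ι} {f : ι → ℝ} (h : ∀ e ∈ s, 0 ≤ f e) :
    Real.sqrt (∏ e ∈ s, f e) = ∏ e ∈ s, Real.sqrt (f e) := by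
  induction s using Finset.cons_induction with
  | empty => simp
  | cons a s ha ih =>
      rw [Finset.prod_cons, Finset.prod_cons, Real.sqrt_mul (h a (Finset.mem_cons_self a s)),
        ih (fun e he => h e (Finset.mem_cons_of_mem he))]

lemma sqrt_mul_le_half_add {a b : ℝ} (ha : 0 ≤ a) (hb : 0 ≤ b) :
    Real.sqrt (a * b) ≤ (a + b) / 2 := by
  nlinarith [Real.sq_sqrt (mul_nonneg ha hb), Real.sqrt_nonneg (a * b),
    Real.sqrt_le_sqrt (mul_self_nonneg (Real.sqrt a - Real.sqrt b)), sq_nonneg (a - b),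
    sq_nonneg (a + b)]

lemma hellinger_bound (ρ1 ρ2 : ι → ℝ) (h1 : ∀ e, 0 ≤ ρ1 e ∧ ρ1 e ≤ 1)
    (h2 : ∀ e, 0 ≤ ρ2 e ∧ ρ2 e ≤ 1) (A : Set (ι → Bool)) :
    mS ρ1 A - mS ρ2 A ≤ 2 * Real.sqrt (2 * (1 - ∏ e,
      (Real.sqrt (ρ1 e * ρ2 e) + Real.sqrt ((1 - ρ1 e) * (1 - ρ2 e))))) := by
  classical
  set B : ℝ := ∑ ω : ι → Bool, Real.sqrt (W ρ1 ω * W ρ2 ω) with hB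
  have ha : ∀ ω, 0 ≤ W ρ1 ω := W_nonneg h1
  have hb : ∀ ω, 0 ≤ W ρ2 ω := W_nonneg h2
  -- step 0
  have step0 : mS ρ1 A - mS ρ2 A ≤ ∑ ω : ι → Bool, |W ρ1 ω - W ρ2 ω| := by
    unfold mS
    rw [← Finset.sum_sub_distrib]
    apply Finset.sum_le_sum
    intro ω _
    rw [Set.indicator_apply, Set.indicator_apply]
    by_cases h : ω ∈ A
    · simp only [if_pos h]
      exact le_abs_self _
    · simp only [if_neg h, sub_zero]
      exact abs_nonneg _
  -- step 1 : Cauchy-Schwarz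
  have step1 : (∑ ω : ι → Bool, |W ρ1 ω - W ρ2 ω|) ^ 2
      ≤ (∑ ω : ι → Bool, (Real.sqrt (W ρ1 ω) - Real.sqrt (W ρ2 ω))^2)
        * ∑ ω : ι → Bool, (Real.sqrt (W ρ1 ω) + Real.sqrt (W ρ2 ω))^2 := by
    apply Finset.sum_sq_le_sum_mul_sum_of_sq_eq_mul
    · intro ω _; positivity
    · intro ω _; positivity
    · intro ω _
      rw [sq_abs]
      have e1 : W ρ1 ω - W ρ2 ω
          = (Real.sqrt (W ρ1 ω) - Real.sqrt (W ρ2 ω)) * (Real.sqrt (W ρ1 ω) + Real.sqrt (W ρ2 ω)) := by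
        have := Real.mul_self_sqrt (ha ω)
        have := Real.mul_self_sqrt (hb ω)
        ring_nf
        nlinarith [Real.mul_self_sqrt (ha ω), Real.mul_self_sqrt (hb ω)]
      rw [e1, mul_pow]
  -- step 2
  have sqrtmul : ∀ ω, Real.sqrt (W ρ1 ω) * Real.sqrt (W ρ2 ω) = Real.sqrt (W ρ1 ω * W ρ2 ω) :=
    fun ω => (Real.sqrt_mul (ha ω) _).symm
  have step2 : ∑ ω : ι → Bool, (Real.sqrt (W ρ1 ω) - Real.sqrt (W ρ2 ω))^2 = 2 - 2 * B := by
    have expand : ∀ ω : ι → Bool, (Real.sqrt (W ρ1 ω) - Real.sqrt (W ρ2 ω))^2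
        = W ρ1 ω + W ρ2 ω - 2 * Real.sqrt (W ρ1 ω * W ρ2 ω) := by
      intro ω
      rw [sub_sq, Real.sq_sqrt (ha ω), Real.sq_sqrt (hb ω), mul_assoc, sqrtmul ω]
      ring
    rw [Finset.sum_congr rfl (fun ω _ => expand ω), Finset.sum_sub_distrib,
      Finset.sum_add_distrib, sum_W, sum_W, ← Finset.mul_sum, ← hB]
    ring
  have step3 : ∑ ω : ι → Bool, (Real.sqrt (W ρ1 ω) + Real.sqrt (W ρ2 ω))^2 = 2 + 2 * B := by
    have expand : ∀ ω : ι → Bool, (Real.sqrt (W ρ1 ω) + Real.sqrt (W ρ2 ω))^2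
        = W ρ1 ω + W ρ2 ω + 2 * Real.sqrt (W ρ1 ω * W ρ2 ω) := by
      intro ω
      rw [add_sq, Real.sq_sqrt (ha ω), Real.sq_sqrt (hb ω), mul_assoc, sqrtmul ω]
      ring
    rw [Finset.sum_congr rfl (fun ω _ => expand ω), Finset.sum_add_distrib,
      Finset.sum_add_distrib, sum_W, sum_W, ← Finset.mul_sum, ← hB]
    ring
  have hBle : B ≤ 1 := by
    rw [hB]
    calc ∑ ω : ι → Bool, Real.sqrt (W ρ1 ω * W ρ2 ω)
        ≤ ∑ ω : ι → Bool, (W ρ1 ω + W ρ2 ω) / 2 :=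
          Finset.sum_le_sum fun ω _ => sqrt_mul_le_half_add (ha ω) (hb ω)
      _ = 1 := by
          rw [← Finset.sum_div, Finset.sum_add_distrib, sum_W, sum_W]
          norm_num
  -- step 4 : product formula for B
  have step4 : B = ∏ e, (Real.sqrt (ρ1 e * ρ2 e) + Real.sqrt ((1 - ρ1 e) * (1 - ρ2 e))) := by
    rw [hB]
    have e1 : ∀ ω : ι → Bool, Real.sqrt (W ρ1 ω * W ρ2 ω)
        = ∏ e, Real.sqrt (wgt (ρ1 e) (ω e) * wgt (ρ2 e) (ω e)) := by
      intro ω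
      rw [show W ρ1 ω * W ρ2 ω = ∏ e, (wgt (ρ1 e) (ω e) * wgt (ρ2 e) (ω e)) by
        rw [Finset.prod_mul_distrib]; rfl]
      exact sqrt_prod fun e _ => mul_nonneg (wgt_nonneg (h1 e).1 (h1 e).2 _)
        (wgt_nonneg (h2 e).1 (h2 e).2 _)
    rw [Finset.sum_congr rfl (fun ω _ => e1 ω)]
    exact (sum_prod_eq (fun e b => Real.sqrt (wgt (ρ1 e) b * wgt (ρ2 e) b))).trans
      (Finset.prod_congr rfl fun e _ => by simp [wgt, add_comm])
  have h2B : 0 ≤ 2 - 2 * B := step2 ▸ Finset.sum_nonneg (fun ω _ => sq_nonneg _)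
  have hnn : 0 ≤ ∑ ω : ι → Bool, |W ρ1 ω - W ρ2 ω| :=
    Finset.sum_nonneg fun ω _ => abs_nonneg _
  have h4 : (∑ ω : ι → Bool, |W ρ1 ω - W ρ2 ω|)^2 ≤ (2 - 2*B) * 4 := by
    calc (∑ ω : ι → Bool, |W ρ1 ω - W ρ2 ω|)^2
        ≤ (2 - 2*B) * (2 + 2*B) := by rw [← step2, ← step3]; exact step1
      _ ≤ (2 - 2*B) * 4 := by nlinarith
  have habs : ∑ ω : ι → Bool, |W ρ1 ω - W ρ2 ω| ≤ 2 * Real.sqrt (2 - 2 * B) := by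
    have h5 := (Real.le_sqrt hnn (by positivity)).2 h4
    rwa [Real.sqrt_mul h2B, show Real.sqrt (4:ℝ) = 2 by
        rw [show (4:ℝ) = 2^2 by norm_num, Real.sqrt_sq (by norm_num : (0:ℝ) ≤ 2)],
      mul_comm] at h5
  calc mS ρ1 A - mS ρ2 A ≤ ∑ ω : ι → Bool, |W ρ1 ω - W ρ2 ω| := step0
    _ ≤ 2 * Real.sqrt (2 - 2 * B) := habs
    _ = 2 * Real.sqrt (2 * (1 - ∏ e, (Real.sqrt (ρ1 e * ρ2 e)
        + Real.sqrt ((1 - ρ1 e) * (1 - ρ2 e))))) := by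
          rw [← step4]
          congr 1
          congr 1
          ring

lemma sqrt1 (p δ : ℝ) (hp : 0 < p) (hδ : 0 ≤ δ) :
    8*p^2 + 4*p*δ - δ^2 ≤ 8 * (p * Real.sqrt (p * (p + δ))) := by
  rcases le_or_gt (8*p^2 + 4*p*δ - δ^2) 0 with h | h
  · have hs : 0 ≤ Real.sqrt (p * (p + δ)) := Real.sqrt_nonneg _
    nlinarith
  · have hd : δ ≤ 8*p := by nlinarith
    have key : (8*p^2 + 4*p*δ - δ^2)^2 ≤ (8*p)^2 * (p*(p+δ)) := by
      nlinarith [mul_le_mul_of_nonneg_right hd (pow_nonneg hδ 3)]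
    have h2 := (Real.le_sqrt h.le (by positivity)).2 key
    rwa [Real.sqrt_mul (sq_nonneg _), Real.sqrt_sq (by positivity : (0:ℝ) ≤ 8*p),
      show (8*p) * Real.sqrt (p*(p+δ)) = 8 * (p * Real.sqrt (p*(p+δ))) by ring] at h2

lemma sqrt2 (ε : ℝ) (h0 : 0 ≤ ε) (h1 : ε ≤ 1) :
    1 - ε/2 - ε^2/2 ≤ Real.sqrt (1 - ε) := by
  rcases le_or_gt (1 - ε/2 - ε^2/2) 0 with h | h
  · exact h.trans (Real.sqrt_nonneg _)
  · exact (Real.le_sqrt h.le (by linarith)).2 (by nlinarith)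

lemma bD_bound {p ε : ℝ} (hp0 : 0 < p) (hp1 : p ≤ 1) (hε0 : 0 ≤ ε) (hε1 : ε ≤ 1) :
    p * (1 - (Real.sqrt ((p + ε*(1-p)) * p)
      + Real.sqrt ((1 - (p + ε*(1-p))) * (1 - p)))) ≤ ε^2 := by
  set δ := ε * (1 - p) with hδdef
  have hδ : 0 ≤ δ := mul_nonneg hε0 (by linarith)
  have e1 : (p + ε*(1-p)) * p = p * (p + δ) := by rw [hδdef]; ring
  have e2 : (1 - (p + ε*(1-p))) * (1 - p) = (1-p)^2 * (1 - ε) := by ring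
  rw [e1, e2]
  have h1 := sqrt1 p δ hp0 hδ
  have h2 := sqrt2 ε hε0 hε1
  have e3 : Real.sqrt ((1-p)^2 * (1-ε)) = (1-p) * Real.sqrt (1-ε) := by
    rw [Real.sqrt_mul (sq_nonneg _), Real.sqrt_sq (by linarith)]
  rw [e3]
  have h3 : p * ((1-p) * (1 - ε/2 - ε^2/2)) ≤ p * ((1-p) * Real.sqrt (1-ε)) :=
    mul_le_mul_of_nonneg_left (mul_le_mul_of_nonneg_left h2 (by linarith)) hp0.le
  have hδe : δ = ε * (1 - p) := hδdef
  nlinarith [sq_nonneg (ε*(1-p)), sq_nonneg ε, mul_nonneg (mul_nonneg hp0.le (by linarith : (0:ℝ) ≤ 1 - p)) (sq_nonneg ε)]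

lemma b_nonneg {p q : ℝ} : 0 ≤ Real.sqrt (q * p) + Real.sqrt ((1 - q) * (1 - p)) := by
  positivity

lemma b_le_one {p q : ℝ} (hp0 : 0 ≤ p) (hp1 : p ≤ 1) (hq0 : 0 ≤ q) (hq1 : q ≤ 1) :
    Real.sqrt (q * p) + Real.sqrt ((1 - q) * (1 - p)) ≤ 1 := by
  have h1 := sqrt_mul_le_half_add hq0 hp0
  have h2 := sqrt_mul_le_half_add (by linarith : (0:ℝ) ≤ 1 - q) (by linarith : (0:ℝ) ≤ 1 - p)
  linarith

lemma main_ineq (D : Finset ι) (A : Set (ι → Bool))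
    (hmono : ∀ ω ω' : ι → Bool, (∀ e, ω e = true → ω' e = true) → ω ∈ A → ω' ∈ A)
    {p ε : ℝ} (hp0 : 0 < p) (hp1 : p ≤ 1) (hε0 : 0 ≤ ε) (hε1 : ε ≤ 1)
    {M : ℕ} (hMN : M ≤ D.card) (hMε : (M : ℝ) < D.card * ε) :
    0 ≤ (D.card.choose M : ℝ)⁻¹ * (∑ s ∈ D.powersetCard M, mS (fun _ => p) (addE s ⁻¹' A))
        - mS (fun _ : ι => p) A
    ∧ (D.card.choose M : ℝ)⁻¹ * (∑ s ∈ D.powersetCard M, mS (fun _ => p) (addE s ⁻¹' A))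
        - mS (fun _ : ι => p) A
      ≤ 2 * Real.sqrt (2 * (D.card * (ε^2 / p))) + D.card * ε * ((D.card * ε - M)⁻¹)^2 := by
  classical
  set N := D.card with hN
  have hC : (0:ℝ) < (N.choose M : ℝ) := by exact_mod_cast Nat.choose_pos hMN
  have hpb : ∀ e : ι, 0 ≤ (fun _ : ι => p) e ∧ (fun _ : ι => p) e ≤ 1 :=
    fun _ => ⟨hp0.le, hp1⟩
  set q := p + ε * (1 - p) with hq
  have hq0 : 0 ≤ q := by rw [hq]; nlinarith
  have hq1 : q ≤ 1 := by rw [hq]; nlinarith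
  set ρmix : ι → ℝ := fun e => if e ∈ D then q else p with hρmix
  have hmixb : ∀ e : ι, 0 ≤ ρmix e ∧ ρmix e ≤ 1 := by
    intro e
    rw [hρmix]
    by_cases h : e ∈ D <;> simp [h, hq0, hq1, hp0.le, hp1]
  set μplus := (N.choose M : ℝ)⁻¹ * (∑ s ∈ D.powersetCard M, mS (fun _ => p) (addE s ⁻¹' A))
    with hμplus
  -- subset monotonicity of preimages
  have hsub : ∀ s K : Finset ι, s ⊆ K → (addE s ⁻¹' A) ⊆ (addE K ⁻¹' A) := by
    intro s K hsK ω hω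
    rw [Set.mem_preimage] at *
    refine hmono (addE s ω) (addE K ω) (fun e he => ?_) hω
    simp only [addE, Bool.or_eq_true, decide_eq_true_eq] at he ⊢
    rcases he with h | h
    · exact Or.inl h
    · exact Or.inr (hsK h)
  have hAsub : ∀ s : Finset ι, A ⊆ addE s ⁻¹' A := by
    intro s ω hω
    rw [Set.mem_preimage]
    exact hmono ω (addE s ω) (fun e he => by simp [addE, he]) hω
  have cardPC : (D.powersetCard M).card = N.choose M := by
    rw [Finset.card_powersetCard, hN]
  -- lower bound
  have lower : mS (fun _ : ι => p) A ≤ μplus := by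
    have h1 : (N.choose M : ℝ) * mS (fun _ : ι => p) A
        ≤ ∑ s ∈ D.powersetCard M, mS (fun _ => p) (addE s ⁻¹' A) := by
      calc (N.choose M : ℝ) * mS (fun _ : ι => p) A
          = ∑ _s ∈ D.powersetCard M, mS (fun _ : ι => p) A := by
            rw [Finset.sum_const, cardPC, nsmul_eq_mul]
        _ ≤ _ := Finset.sum_le_sum fun s _ => mS_mono hpb (hAsub s)
    calc mS (fun _ : ι => p) A
        = (N.choose M : ℝ)⁻¹ * ((N.choose M : ℝ) * mS (fun _ : ι => p) A) := by
          rw [← mul_assoc, inv_mul_cancel₀ hC.ne', one_mul]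
      _ ≤ μplus := by
          rw [hμplus]
          exact mul_le_mul_of_nonneg_left h1 (inv_nonneg.2 hC.le)
  -- chain
  set T : ℝ := ∑ K ∈ D.powerset.filter (fun K => K.card < M), WKp ε D K with hT
  have hT0 : 0 ≤ T := Finset.sum_nonneg fun K _ => WKp_nonneg hε0 hε1 D K
  have hTtail : T ≤ N * ε * ((N * ε - M)⁻¹)^2 := tail_bound hε0 hε1 D M hMε
  have hsplit : ∑ K ∈ D.powerset.filter (fun K => M ≤ K.card), WKp ε D K = 1 - T := by
    have h1 := Finset.sum_filter_add_sum_filter_not D.powerset (fun K => M ≤ K.card)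
      (fun K => WKp ε D K)
    rw [sum_WKp] at h1
    have h2 : D.powerset.filter (fun K => ¬ M ≤ K.card)
        = D.powerset.filter (fun K => K.card < M) := by
      apply Finset.filter_congr
      intro K _
      exact Nat.not_le
    rw [h2] at h1
    rw [hT]
    linarith
  have chain : (1 - T) * μplus ≤ mS ρmix A := by
    have hIdent : mS ρmix A = ∑ K ∈ D.powerset, WKp ε D K * mS (fun _ => p) (addE K ⁻¹' A) := by
      have := identityI (ι := ι) p ε D A
      rw [hρmix, hq]
      convert this using 2
    have step1 : ∑ K ∈ D.powerset, WKp ε D K *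
        (((K.card.choose M : ℝ))⁻¹ * ∑ s ∈ K.powersetCard M, mS (fun _ => p) (addE s ⁻¹' A))
        ≤ mS ρmix A := by
      rw [hIdent]
      apply Finset.sum_le_sum
      intro K hK
      apply mul_le_mul_of_nonneg_left _ (WKp_nonneg hε0 hε1 D K)
      by_cases hKM : M ≤ K.card
      · have hCK : (0:ℝ) < (K.card.choose M : ℝ) := by exact_mod_cast Nat.choose_pos hKM
        have h1 : ∑ s ∈ K.powersetCard M, mS (fun _ => p) (addE s ⁻¹' A)
            ≤ (K.card.choose M : ℝ) * mS (fun _ => p) (addE K ⁻¹' A) := by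
          have h2 := Finset.sum_le_card_nsmul (K.powersetCard M)
            (fun s => mS (fun _ => p) (addE s ⁻¹' A)) (mS (fun _ => p) (addE K ⁻¹' A))
            (fun s hs => mS_mono hpb (hsub s K (Finset.mem_powersetCard.1 hs).1))
          rwa [Finset.card_powersetCard, nsmul_eq_mul] at h2
        calc ((K.card.choose M : ℝ))⁻¹ * ∑ s ∈ K.powersetCard M, mS (fun _ => p) (addE s ⁻¹' A)
            ≤ ((K.card.choose M : ℝ))⁻¹ * ((K.card.choose M : ℝ) * mS (fun _ => p) (addE K ⁻¹' A)) :=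
              mul_le_mul_of_nonneg_left h1 (inv_nonneg.2 hCK.le)
          _ = mS (fun _ => p) (addE K ⁻¹' A) := by
              rw [← mul_assoc, inv_mul_cancel₀ hCK.ne', one_mul]
      · rw [Finset.powersetCard_eq_empty.2 (Nat.lt_of_not_le hKM), Finset.sum_empty, mul_zero]
        exact mS_nonneg hpb _
    have swap : ∑ K ∈ D.powerset, WKp ε D K *
        (((K.card.choose M : ℝ))⁻¹ * ∑ s ∈ K.powersetCard M, mS (fun _ => p) (addE s ⁻¹' A))
        = ∑ s ∈ D.powersetCard M, mS (fun _ => p) (addE s ⁻¹' A) *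
            ∑ K ∈ D.powerset.filter (fun K => s ⊆ K), ((K.card.choose M : ℝ))⁻¹ * WKp ε D K := by
      have e1 : ∀ K ∈ D.powerset, WKp ε D K *
          (((K.card.choose M : ℝ))⁻¹ * ∑ s ∈ K.powersetCard M, mS (fun _ => p) (addE s ⁻¹' A))
          = ∑ s ∈ K.powersetCard M,
              mS (fun _ => p) (addE s ⁻¹' A) * (((K.card.choose M : ℝ))⁻¹ * WKp ε D K) := by
        intro K _
        rw [Finset.mul_sum, Finset.mul_sum]
        exact Finset.sum_congr rfl fun s _ => by ring
      rw [Finset.sum_congr rfl e1]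
      rw [Finset.sum_comm' (s := D.powerset) (t := fun K => K.powersetCard M)
        (t' := D.powersetCard M) (s' := fun s => D.powerset.filter (fun K => s ⊆ K)) ?_]
      · exact Finset.sum_congr rfl fun s _ => by rw [← Finset.mul_sum]
      · intro K s
        simp only [Finset.mem_powerset, Finset.mem_powersetCard, Finset.mem_filter]
        constructor
        · rintro ⟨hKD, hsK, hcard⟩
          exact ⟨⟨hKD, hsK⟩, hsK.trans hKD, hcard⟩
        · rintro ⟨⟨hKD, hsK⟩, _, hcard⟩
          exact ⟨hKD, hsK, hcard⟩
    have coeff : ∀ s ∈ D.powersetCard M,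
        ∑ K ∈ D.powerset.filter (fun K => s ⊆ K), ((K.card.choose M : ℝ))⁻¹ * WKp ε D K
          = (N.choose M : ℝ)⁻¹ * (1 - T) := by
      intro s hs
      have h1 := coeff_lemma (ε := ε) hs
      rw [hsplit] at h1
      rw [← h1, ← mul_assoc, inv_mul_cancel₀ hC.ne', one_mul]
    calc (1 - T) * μplus
        = ∑ s ∈ D.powersetCard M, mS (fun _ => p) (addE s ⁻¹' A) * ((N.choose M : ℝ)⁻¹ * (1 - T)) := by
          rw [← Finset.sum_mul, hμplus]
          ring
      _ = ∑ s ∈ D.powersetCard M, mS (fun _ => p) (addE s ⁻¹' A) *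
            ∑ K ∈ D.powerset.filter (fun K => s ⊆ K), ((K.card.choose M : ℝ))⁻¹ * WKp ε D K := by
          exact Finset.sum_congr rfl fun s hs => by rw [coeff s hs]
      _ = ∑ K ∈ D.powerset, WKp ε D K *
            (((K.card.choose M : ℝ))⁻¹ * ∑ s ∈ K.powersetCard M, mS (fun _ => p) (addE s ⁻¹' A)) :=
          swap.symm
      _ ≤ mS ρmix A := step1
  -- Hellinger comparison
  have hell : mS ρmix A - mS (fun _ : ι => p) A ≤ 2 * Real.sqrt (2 * (N * (ε^2 / p))) := by
    have h1 := hellinger_bound ρmix (fun _ : ι => p) hmixb hpb A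
    set bD := Real.sqrt (q * p) + Real.sqrt ((1 - q) * (1 - p)) with hbD
    have hprod : ∏ e : ι, (Real.sqrt (ρmix e * p) + Real.sqrt ((1 - ρmix e) * (1 - p)))
        = bD ^ N := by
      have e1 : ∀ e : ι, (Real.sqrt (ρmix e * p) + Real.sqrt ((1 - ρmix e) * (1 - p)))
          = if e ∈ D then bD else 1 := by
        intro e
        rw [hρmix]
        by_cases h : e ∈ D
        · simp [h, hbD]
        · simp only [h, if_neg, if_false]
          rw [Real.sqrt_mul_self hp0.le,
            Real.sqrt_mul_self (by linarith : (0:ℝ) ≤ 1 - p)]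
          ring
      rw [Finset.prod_congr rfl (fun e _ => e1 e), ← Finset.prod_mul_prod_compl D,
        Finset.prod_congr rfl (fun e (he : e ∈ D) => if_pos he),
        Finset.prod_congr rfl (fun e (he : e ∈ Dᶜ) => if_neg (Finset.mem_compl.1 he)),
        Finset.prod_const, Finset.prod_const_one, mul_one, hN]
    have hbD0 : 0 ≤ bD := b_nonneg
    have hbD1 : bD ≤ 1 := b_le_one hp0.le hp1 hq0 hq1
    have hpow : 1 - bD ^ N ≤ N * (1 - bD) := by
      have := one_add_mul_le_pow (a := bD - 1) (by linarith) N
      have h2 : 1 + (N:ℝ) * (bD - 1) ≤ bD ^ N := by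
        have e : (1 + (bD - 1)) = bD := by ring
        rw [e] at this; exact this
      nlinarith
    have hbDb : 1 - bD ≤ ε^2 / p := by
      rw [le_div_iff₀ hp0]
      have := bD_bound hp0 hp1 hε0 hε1
      rw [hbD, hq]
      nlinarith [bD_bound hp0 hp1 hε0 hε1]
    calc mS ρmix A - mS (fun _ : ι => p) A
        ≤ 2 * Real.sqrt (2 * (1 - ∏ e : ι, (Real.sqrt (ρmix e * p)
            + Real.sqrt ((1 - ρmix e) * (1 - p))))) := h1
      _ ≤ 2 * Real.sqrt (2 * (N * (ε^2 / p))) := by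
          apply mul_le_mul_of_nonneg_left _ (by norm_num : (0:ℝ) ≤ 2)
          apply Real.sqrt_le_sqrt
          rw [hprod]
          have : (0:ℝ) ≤ N * (1 - bD) := by
            apply mul_nonneg (Nat.cast_nonneg N)
            linarith
          nlinarith [hpow, hbDb, Nat.cast_nonneg (α := ℝ) N]
  -- combine
  have hμplus1 : μplus ≤ 1 := by
    rw [hμplus]
    have h1 : ∑ s ∈ D.powersetCard M, mS (fun _ => p) (addE s ⁻¹' A) ≤ (N.choose M : ℝ) := by
      have h2 := Finset.sum_le_card_nsmul (D.powersetCard M)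
        (fun s => mS (fun _ => p) (addE s ⁻¹' A)) 1 (fun s _ => mS_le_one hpb _)
      rwa [cardPC, nsmul_eq_mul, mul_one] at h2
    calc (N.choose M : ℝ)⁻¹ * ∑ s ∈ D.powersetCard M, mS (fun _ => p) (addE s ⁻¹' A)
        ≤ (N.choose M : ℝ)⁻¹ * (N.choose M : ℝ) := mul_le_mul_of_nonneg_left h1 (inv_nonneg.2 hC.le)
      _ = 1 := inv_mul_cancel₀ hC.ne'
  refine ⟨by linarith, ?_⟩
  have final : μplus - mS (fun _ : ι => p) A
      ≤ (mS ρmix A - mS (fun _ : ι => p) A) + T := by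
    nlinarith [chain, hμplus1, hT0]
  calc μplus - mS (fun _ : ι => p) A
      ≤ (mS ρmix A - mS (fun _ : ι => p) A) + T := final
    _ ≤ 2 * Real.sqrt (2 * (N * (ε^2 / p))) + N * ε * ((N * ε - M)⁻¹)^2 := by
        exact add_le_add hell hTtail


instance erProb (n : ℕ) (P : ℝ≥0∞) : IsProbabilityMeasure (erMeasure n P) := by
  unfold erMeasure; infer_instance

lemma allMeasurable {α : Type*} [Countable α] [MeasurableSpace α] [MeasurableSingletonClass α]
    (S : Set α) : MeasurableSet S := S.to_countable.measurableSet

lemma meas_eq_sum {α : Type*} [Fintype α] [DecidableEq α] [MeasurableSpace α]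
    [MeasurableSingletonClass α] (μ : Measure α) (S : Set α) [DecidablePred (· ∈ S)] :
    μ S = ∑ x ∈ Finset.univ.filter (· ∈ S), μ {x} := by
  conv_lhs => rw [show S = ⋃ x ∈ (Finset.univ.filter (· ∈ S) : Finset α), ({x} : Set α) by
    ext y; simp]
  rw [measure_biUnion_finset ?_ (fun _ _ => measurableSet_singleton _)]
  intro x _ y _ hxy
  simp [Set.disjoint_singleton, hxy]

lemma erMeasure_singleton {n : ℕ} {P : ℝ≥0∞} (hP : P ≤ 1) (ω : Sym2 (Fin n) → Bool) :
    erMeasure n P {ω} = ∏ e : Sym2 (Fin n), (bif ω e then P else 1 - P) := by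
  rw [erMeasure, ← Set.univ_pi_singleton ω, Measure.pi_pi]
  exact Finset.prod_congr rfl fun e _ => by
    rw [PMF.toMeasure_apply_singleton _ _ (measurableSet_singleton _), PMF.bernoulli_apply,
      min_eq_left hP]
    have hPt := ne_top_of_le_ne_top one_ne_top hP
    cases ω e <;> simp [ENNReal.coe_sub, ENNReal.coe_toNNReal hPt]

lemma bridge1 {n : ℕ} {P : ℝ≥0∞} (hP : P ≤ 1) (S : Set (Sym2 (Fin n) → Bool)) :
    (erMeasure n P S).toReal = mS (fun _ => P.toReal) S := by
  classical
  have hPne : P ≠ ⊤ := (hP.trans_lt (by norm_num)).ne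
  rw [meas_eq_sum]
  have hterm : ∀ ω : Sym2 (Fin n) → Bool, (erMeasure n P {ω}).toReal
      = W (fun _ => P.toReal) ω := by
    intro ω
    rw [erMeasure_singleton hP, ENNReal.toReal_prod]
    apply Finset.prod_congr rfl
    intro e _
    cases h : ω e
    · simp only [Bool.cond_false, W, wgt]
      rw [ENNReal.toReal_sub_of_le hP (by norm_num)]
      simp
    · simp [wgt]
  rw [ENNReal.toReal_sum (fun ω _ => measure_ne_top _ _)]
  rw [Finset.sum_congr rfl (fun ω _ => hterm ω)]
  rw [mS, Finset.sum_indicator_eq_sum_filter]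

lemma bridge2 {n : ℕ} {P : ℝ≥0∞} (hP : P ≤ 1) {M : ℕ} (S : Set (Sym2 (Fin n) → Bool))
    (hS : MeasurableSet S) :
    (erPlus n P M S).toReal
      = ((((Finset.univ.filter fun e : Sym2 (Fin n) => ¬ e.IsDiag).powersetCard M).card : ℝ))⁻¹
        * ∑ s ∈ (Finset.univ.filter fun e : Sym2 (Fin n) => ¬ e.IsDiag).powersetCard M,
            mS (fun _ => P.toReal) (addEdges s ⁻¹' S) := by
  classical
  rw [erPlus, Measure.smul_apply, Measure.finset_sum_apply, smul_eq_mul, ENNReal.toReal_mul,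
    ENNReal.toReal_inv]
  have hc : ((((Finset.univ.filter fun e : Sym2 (Fin n) => ¬ e.IsDiag).powersetCard M).card : ℝ≥0∞)).toReal
      = ((((Finset.univ.filter fun e : Sym2 (Fin n) => ¬ e.IsDiag).powersetCard M).card : ℝ)) := by
    simp
  rw [hc]
  congr 1
  rw [ENNReal.toReal_sum (fun s _ => ?_)]
  · apply Finset.sum_congr rfl
    intro s _
    rw [Measure.map_apply (measurable_of_countable _) hS]
    exact bridge1 hP _
  · rw [Measure.map_apply (measurable_of_countable _) hS]
    exact measure_ne_top _ _

lemma erPlus_zero (n : ℕ) (P : ℝ≥0∞) : erPlus n P 0 = erMeasure n P := by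
  rw [erPlus, Finset.powersetCard_zero, Finset.sum_singleton]
  have h1 : addEdges (∅ : Finset (Sym2 (Fin n))) = id := by
    funext ω e
    simp [addEdges]
  rw [h1, Measure.map_id]
  simp

lemma card_nondiag (n : ℕ) :
    (Finset.univ.filter fun e : Sym2 (Fin n) => ¬ e.IsDiag).card = n.choose 2 := by
  rw [← Fintype.card_subtype, Sym2.card_subtype_not_diag, Fintype.card_fin]


end Stmt13

open Stmt13 Finset in
/-- For a monotone graph property `A` and `M = o(√(p·(n choose 2)))` random added edges,
`|μ(p) − μ⁺(p,M)| = o(1)`. -/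
theorem stmt_13 (A : ∀ n, Set (Sym2 (Fin n) → Bool))
    (hAm : ∀ n, MeasurableSet (A n))
    (hmono : ∀ n (ω ω' : Sym2 (Fin n) → Bool),
      (∀ e, ω e = true → ω' e = true) → ω ∈ A n → ω' ∈ A n)
    (p : ℕ → ℝ≥0∞) (hp : ∀ n, p n ≤ 1) (M : ℕ → ℕ)
    (hM : (fun n => (M n : ℝ)) =o[Filter.atTop]
      fun n => Real.sqrt ((p n).toReal * (n.choose 2 : ℝ))) :
    Filter.Tendsto
      (fun n => |(erMeasure n (p n) (A n)).toReal - (erPlus n (p n) (M n) (A n)).toReal|)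
      Filter.atTop (nhds 0) := by
  rw [Metric.tendsto_atTop]
  intro η hη
  set δ : ℝ := min η 2 / 4 with hδdef
  have hδ0 : 0 < δ := by
    rw [hδdef]
    have : 0 < min η 2 := lt_min hη (by norm_num)
    linarith
  have hδh : δ ≤ 1/2 := by
    rw [hδdef]
    have : min η 2 ≤ 2 := min_le_right _ _
    linarith
  have h2δ : 2 * δ < η := by
    rw [hδdef]
    rcases le_or_gt η 2 with h | h
    · rw [min_eq_left h]; linarith
    · rw [min_eq_right h.le]; linarith
  have hc : (0:ℝ) < δ^2/32 := by positivity
  obtain ⟨n₀, hn₀⟩ := Filter.eventually_atTop.1 ((Asymptotics.isLittleO_iff.1 hM) hc)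
  refine ⟨n₀, fun n hn => ?_⟩
  have hbound := hn₀ n hn
  rw [Real.norm_eq_abs, Real.norm_eq_abs, abs_of_nonneg (by positivity : (0:ℝ) ≤ (M n : ℝ)),
    abs_of_nonneg (Real.sqrt_nonneg _)] at hbound
  rw [Real.dist_eq, sub_zero, abs_abs]
  by_cases hM0 : M n = 0
  · rw [hM0, erPlus_zero, sub_self, abs_zero]
    exact hη
  -- nontrivial case
  set pr : ℝ := (p n).toReal with hprdef
  set Nr : ℝ := (n.choose 2 : ℝ) with hNrdef
  set R : ℝ := Real.sqrt (pr * Nr) with hRdef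
  have hpr0 : 0 ≤ pr := ENNReal.toReal_nonneg
  have hpr1 : pr ≤ 1 := by
    rw [hprdef]
    calc (p n).toReal ≤ (1:ℝ≥0∞).toReal := ENNReal.toReal_mono (by norm_num) (hp n)
      _ = 1 := by norm_num
  have hM1 : (1:ℝ) ≤ (M n : ℝ) := by
    have := Nat.one_le_iff_ne_zero.2 hM0
    exact_mod_cast this
  have hMR : (M n : ℝ) ≤ δ^2/32 * R := hbound
  have hR32 : 32/δ^2 ≤ R := by
    rw [ge_iff_le, div_le_iff₀ (by positivity : (0:ℝ) < δ^2)] at *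
    nlinarith [hMR, hM1]
  have hR0 : 0 < R := lt_of_lt_of_le (by positivity) hR32
  have hprN : 0 < pr * Nr := Real.sqrt_pos.1 (hRdef ▸ hR0)
  have hNrnn : (0:ℝ) ≤ Nr := Nat.cast_nonneg _
  have hpr0' : 0 < pr := by
    rcases mul_pos_iff.1 hprN with ⟨h1, _⟩ | ⟨_, h2⟩
    · exact h1
    · linarith
  have hNr0 : (0:ℝ) < Nr := by
    rcases mul_pos_iff.1 hprN with ⟨_, h1⟩ | ⟨h1, _⟩
    · exact h1
    · linarith
  set Dn := Finset.univ.filter (fun e : Sym2 (Fin n) => ¬ e.IsDiag) with hDn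
  have hDcard : ((Dn.card : ℕ) : ℝ) = Nr := by
    rw [hDn, card_nondiag n, hNrdef]
  set ε : ℝ := δ * R / (8 * Nr) with hεdef
  have hε0 : 0 ≤ ε := by positivity
  have hNr1 : (1:ℝ) ≤ Nr := by
    have hNr0' : (0:ℝ) < (n.choose 2 : ℝ) := hNrdef ▸ hNr0
    have hh : 0 < n.choose 2 := by exact_mod_cast hNr0'
    rw [hNrdef]
    exact_mod_cast hh
  have hRN : R ≤ Nr := by
    have h1 : pr * Nr ≤ Nr * Nr := by
      nlinarith [mul_le_mul_of_nonneg_right hpr1 hNrnn,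
        mul_le_mul_of_nonneg_right hNr1 hNrnn]
    calc R = Real.sqrt (pr * Nr) := hRdef
      _ ≤ Real.sqrt (Nr * Nr) := Real.sqrt_le_sqrt h1
      _ = Nr := Real.sqrt_mul_self hNrnn
  have hε1 : ε ≤ 1 := by
    rw [hεdef, div_le_one (by positivity)]
    nlinarith
  have hR2 : R^2 = pr * Nr := Real.sq_sqrt hprN.le
  set x : ℝ := Nr * ε with hxdef
  have hNε : x = δ * R / 8 := by
    rw [hxdef, hεdef]
    field_simp
  have hx4 : 4/δ ≤ x := by
    rw [hNε]
    rw [div_le_iff₀ hδ0] at *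
    nlinarith [hR32, hδ0, sq_nonneg δ]
  have hxpos : 0 < x := lt_of_lt_of_le (by positivity) hx4
  have hMx : (M n : ℝ) ≤ δ * x / 4 := by
    rw [hNε]
    nlinarith [hMR, hδ0]
  have hMN : M n ≤ Dn.card := by
    have h1 : (M n : ℝ) ≤ ((Dn.card : ℕ) : ℝ) := by
      rw [hDcard]
      have hxN : x ≤ Nr := by
        rw [hxdef]
        nlinarith [mul_le_mul_of_nonneg_left hε1 hNr0.le]
      nlinarith [hMx, mul_le_mul_of_nonneg_right hδh hxpos.le, hxpos, hxN]
    exact_mod_cast h1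
  have hMε : (M n : ℝ) < (Dn.card : ℝ) * ε := by
    rw [hDcard, ← hxdef]
    nlinarith [hMx, mul_le_mul_of_nonneg_right hδh hxpos.le, hxpos]
  obtain ⟨h1, h2⟩ := main_ineq Dn (A n) (hmono n) hpr0' hpr1 hε0 hε1 hMN hMε
  have hb1 : (erMeasure n (p n) (A n)).toReal = mS (fun _ => pr) (A n) := bridge1 (hp n) _
  have hb2 : (erPlus n (p n) (M n) (A n)).toReal
      = ((Dn.card.choose (M n) : ℝ))⁻¹
        * ∑ s ∈ Dn.powersetCard (M n), mS (fun _ => pr) (addE s ⁻¹' A n) := by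
    rw [bridge2 (hp n) (A n) (hAm n)]
    congr 1
    rw [Finset.card_powersetCard]
  rw [hb1, hb2, abs_sub_comm, abs_of_nonneg h1]
  -- now bound the RHS of h2 by 2δ
  rw [hDcard, ← hxdef] at h2
  have hterm1 : 2 * Real.sqrt (2 * (Nr * (ε^2/pr))) ≤ δ := by
    have e1 : Nr * ε^2 = δ^2 * pr / 64 := by
      have e2 : Nr * ε^2 = x^2 / Nr := by
        rw [hxdef]
        field_simp
      rw [e2, hNε, div_pow, mul_pow, hR2]
      field_simp
      ring
    have e3 : 2 * (Nr * (ε^2/pr)) = δ^2/32 := by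
      rw [show Nr * (ε^2/pr) = (Nr * ε^2)/pr by ring, e1]
      field_simp
      ring
    rw [e3]
    have e4 : Real.sqrt (δ^2/32) ≤ δ/2 := by
      have : δ^2/32 ≤ (δ/2)^2 := by nlinarith
      calc Real.sqrt (δ^2/32) ≤ Real.sqrt ((δ/2)^2) := Real.sqrt_le_sqrt this
        _ = δ/2 := Real.sqrt_sq (by linarith)
    linarith
  have hterm2 : x * ((x - M n)⁻¹)^2 ≤ δ := by
    have hxM : x/2 ≤ x - (M n : ℝ) := by
      nlinarith [hMx, mul_le_mul_of_nonneg_right hδh hxpos.le, hxpos]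
    have h12 : (0:ℝ) < x/2 := by linarith
    have hinv : (x - (M n : ℝ))⁻¹ ≤ 2/x := by
      have h3 := one_div_le_one_div_of_le h12 hxM
      rw [one_div, one_div] at h3
      calc (x - (M n : ℝ))⁻¹ ≤ (x/2)⁻¹ := h3
        _ = 2/x := by rw [inv_div]
    have h4 : ((x - (M n:ℝ))⁻¹)^2 ≤ (2/x)^2 := by
      apply pow_le_pow_left₀ (inv_nonneg.2 (by linarith)) hinv
    calc x * ((x - (M n:ℝ))⁻¹)^2 ≤ x * (2/x)^2 := mul_le_mul_of_nonneg_left h4 hxpos.le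
      _ = 4/x := by
          field_simp
          ring
      _ ≤ δ := by
          rw [div_le_iff₀ hxpos]
          rw [div_le_iff₀ hδ0] at hx4
          nlinarith [hx4, hδ0]
  calc ((Dn.card.choose (M n) : ℝ))⁻¹
        * ∑ s ∈ Dn.powersetCard (M n), mS (fun _ => pr) (addE s ⁻¹' A n)
        - mS (fun _ => pr) (A n)
      ≤ 2 * Real.sqrt (2 * (Nr * (ε^2/pr))) + x * ((x - M n)⁻¹)^2 := h2
    _ ≤ δ + δ := add_le_add hterm1 hterm2
    _ < η := by linarith
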